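/- Let E be a real inner product space, v₁, …, vₙ ∈ E vectors whose Gram matrix K (Kᵢⱼ = ⟨vᵢ, vⱼ⟩) is positive definite, μ ∈ E, and z ∈ ℝⁿ with zᵢ = ⟨μ, vᵢ⟩. Define g(S) = z_Sᵀ (K_{SS})⁻¹ z_S for S ⊆ {1, …, n}, where z_S and K_{SS} are the restrictions of z and K to indices in S. Then g is monotone nondecreasing: for all S ⊆ T ⊆ {1, …, n}, g(S) ≤ g(T). -/

import Mathlib

open Matrix
open scoped RealInnerProductSpace

section Aux

variable {m k : Type*} [Fintype m] [Fintype k]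

lemma dot_extend (e : m → k) (he : Function.Injective e) (x : m → ℝ) (z : k → ℝ) :
    Function.extend e x 0 ⬝ᵥ z = x ⬝ᵥ (z ∘ e) := by
  classical
  classical
  set F : k → ℝ := fun j => Function.extend e x 0 j * z j with hF
  have h1 : ∑ j ∈ Finset.univ.image e, F j = ∑ i : m, F (e i) :=
    Finset.sum_image (by intro a _ b _ h; exact he h)
  have h2 : ∑ j : k, F j = ∑ j ∈ Finset.univ.image e, F j := by
    refine (Finset.sum_subset (Finset.subset_univ _) ?_).symm
    intro j _ hj
    have hne : ¬ ∃ i, e i = j := by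
      rintro ⟨i, rfl⟩
      exact hj (Finset.mem_image.2 ⟨i, Finset.mem_univ _, rfl⟩)
    simp [hF, Function.extend_apply' _ _ _ hne]
  show ∑ j : k, F j = _
  rw [h2, h1]
  refine Finset.sum_congr rfl fun i _ => ?_
  simp [hF, he.extend_apply]

lemma dot_mulVec_extend (M : Matrix k k ℝ) (e : m → k) (he : Function.Injective e)
    (x : m → ℝ) :
    Function.extend e x 0 ⬝ᵥ (M *ᵥ Function.extend e x 0)
      = x ⬝ᵥ ((M.submatrix e e) *ᵥ x) := by
  rw [dot_extend e he]
  congr 1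
  funext i
  show (M *ᵥ Function.extend e x 0) (e i) = _
  have h1 : (M *ᵥ Function.extend e x 0) (e i) = Function.extend e x 0 ⬝ᵥ (M (e i)) := by
    simp [Matrix.mulVec, dotProduct_comm]
  rw [h1, dot_extend e he, dotProduct_comm]
  rfl

lemma posDef_submatrix {M : Matrix k k ℝ} (hM : M.PosDef) (e : m → k)
    (he : Function.Injective e) : (M.submatrix e e).PosDef := by
  refine posDef_iff_dotProduct_mulVec.2 ⟨hM.1.submatrix e, fun x hx => ?_⟩
  have hy : Function.extend e x 0 ≠ 0 := by
    intro h
    apply hx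
    funext i
    have := congrFun h (e i)
    rwa [he.extend_apply] at this
  have h2 := hM.dotProduct_mulVec_pos hy
  simp only [star_trivial] at h2 ⊢
  rwa [dot_mulVec_extend M e he x] at h2

/-- Variational bound: for positive definite `A`, `2 wᵀz - wᵀAw ≤ zᵀA⁻¹z`. -/
lemma quad_bound [DecidableEq k] {A : Matrix k k ℝ} (hA : A.PosDef) (z w : k → ℝ) :
    2 * (w ⬝ᵥ z) - w ⬝ᵥ (A *ᵥ w) ≤ z ⬝ᵥ (A⁻¹ *ᵥ z) := by
  set y := A⁻¹ *ᵥ z with hy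
  have hz : A *ᵥ y = z := by
    rw [hy, Matrix.mulVec_mulVec, Matrix.mul_nonsing_inv _ (isUnit_iff_ne_zero.2 hA.det_pos.ne'),
      Matrix.one_mulVec]
  have hAt : Aᵀ = A := by
    have := hA.1
    rwa [Matrix.IsHermitian, Matrix.conjTranspose_eq_transpose_of_trivial] at this
  have hsym : ∀ a b : k → ℝ, a ⬝ᵥ (A *ᵥ b) = b ⬝ᵥ (A *ᵥ a) := by
    intro a b
    rw [Matrix.dotProduct_mulVec, ← Matrix.mulVec_transpose, hAt, dotProduct_comm]
  have hnn : 0 ≤ (y - w) ⬝ᵥ (A *ᵥ (y - w)) := by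
    have := hA.posSemidef.dotProduct_mulVec_nonneg (y - w)
    simpa using this
  have e1 : (y - w) ⬝ᵥ (A *ᵥ (y - w))
      = y ⬝ᵥ z - w ⬝ᵥ z - (w ⬝ᵥ z - w ⬝ᵥ (A *ᵥ w)) := by
    have h3 : y ⬝ᵥ (A *ᵥ w) = w ⬝ᵥ z := by rw [hsym, hz]
    rw [Matrix.mulVec_sub, hz, sub_dotProduct, dotProduct_sub,
      dotProduct_sub, h3]
  have e2 : z ⬝ᵥ y = y ⬝ᵥ z := dotProduct_comm _ _
  rw [e1] at hnn
  linarith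

end Aux

/-- The SBQ set objective `g(S) = z_Sᵀ (K_{SS})⁻¹ z_S`, where `z_S` is the subvector of `z`
on indices in `S` and `K_{SS}` is the principal submatrix of `K` on `S`. -/
noncomputable def gObj {n : ℕ} (K : Matrix (Fin n) (Fin n) ℝ) (z : Fin n → ℝ)
    (S : Finset (Fin n)) : ℝ :=
  (fun i : S => z i.1) ⬝ᵥ
    ((K.submatrix (fun i : S => i.1) (fun j : S => j.1))⁻¹ *ᵥ fun i : S => z i.1)

/-- The SBQ objective `g(S) = z_Sᵀ (K_{SS})⁻¹ z_S` built from a positive definite Gram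
matrix `K` of vectors `vᵢ` and `zᵢ = ⟪μ, vᵢ⟫` is monotone nondecreasing in `S`. -/
theorem gObj_monotone {E : Type*} [NormedAddCommGroup E] [InnerProductSpace ℝ E]
    {n : ℕ} (v : Fin n → E) (K : Matrix (Fin n) (Fin n) ℝ)
    (hK : ∀ i j, K i j = ⟪v i, v j⟫) (hKpd : K.PosDef)
    (μ : E) (z : Fin n → ℝ) (hz : ∀ i, z i = ⟪μ, v i⟫)
    (S T : Finset (Fin n)) (hST : S ⊆ T) :
    gObj K z S ≤ gObj K z T := by
  classical
  set zS : S → ℝ := fun i => z i.1 with hzS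
  set zT : T → ℝ := fun i => z i.1 with hzT
  set AS : Matrix S S ℝ := K.submatrix (fun i : S => i.1) (fun j : S => j.1) with hAS
  set AT : Matrix T T ℝ := K.submatrix (fun i : T => i.1) (fun j : T => j.1) with hAT
  have hASpd : AS.PosDef := posDef_submatrix hKpd _ Subtype.val_injective
  have hATpd : AT.PosDef := posDef_submatrix hKpd _ Subtype.val_injective
  set e : S → T := fun i => ⟨i.1, hST i.2⟩ with he
  have hei : Function.Injective e := fun a b h => Subtype.ext (congrArg Subtype.val h : (e a).1 = (e b).1)
  set w₀ : S → ℝ := AS⁻¹ *ᵥ zS with hw₀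
  have hASw : AS *ᵥ w₀ = zS := by
    rw [hw₀, Matrix.mulVec_mulVec,
      Matrix.mul_nonsing_inv _ (isUnit_iff_ne_zero.2 hASpd.det_pos.ne'), Matrix.one_mulVec]
  have hsub : AT.submatrix e e = AS := rfl
  have hcomp : zT ∘ e = zS := rfl
  have key := quad_bound hATpd zT (Function.extend e w₀ 0)
  rw [dot_extend e hei, hcomp, dot_mulVec_extend AT e hei, hsub, hASw] at key
  have hgS : gObj K z S = w₀ ⬝ᵥ zS := by
    rw [dotProduct_comm]; rfl
  have hgT : gObj K z T = zT ⬝ᵥ (AT⁻¹ *ᵥ zT) := rfl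
  rw [hgS, hgT]
  linarith
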